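/- arXiv:1303.2485 — 2 statements merged into one kernel-verified Lean document; each statement's English description precedes it below -/
import Mathlib

section
/- Let T be a bounded operator on a complex Hilbert space H, let n ≥ 1, and let λ₀, λ₁, …, λ_n be complex scalars with λ₀ ≠ 0. The (n+1)-Kronecker representation with f_{α₀} = ∑_{k=0}^{n} λ_k T^k and f_{α_k} = T^k for k = 1, …, n (on H₁ = H₂ = H) is indecomposable — i.e., the only pairs (A,B) of idempotent bounded operators with B f_{α_k} = f_{α_k} A for all k = 0, …, n are (0,0) and (I,I) — if and only if T is strongly irreducible. -/
/-- A bounded operator `T` on a complex Hilbert space is *strongly irreducible* if there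
is no pair of non-zero closed `T`-invariant subspaces `M`, `N` with `M ∩ N = 0` and
`M + N = H`. -/
def StronglyIrreducible {H : Type*} [NormedAddCommGroup H] [InnerProductSpace ℂ H]
    (T : H →L[ℂ] H) : Prop :=
  ¬ ∃ M N : Submodule ℂ H,
      IsClosed (M : Set H) ∧ IsClosed (N : Set H) ∧
      (∀ x ∈ M, T x ∈ M) ∧ (∀ x ∈ N, T x ∈ N) ∧
      M ⊓ N = ⊥ ∧ M ⊔ N = ⊤ ∧ M ≠ ⊥ ∧ N ≠ ⊥

/-- **The `(n+1)`-Kronecker representation `(∑_{k=0}^n λ_k T^k, T, T², …, T^n)`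
(with `λ₀ ≠ 0`) is indecomposable iff `T` is strongly irreducible.**
Indecomposability: the only pairs `(A, B)` of idempotent bounded operators with
`B f_{α_k} = f_{α_k} A` for all `k` are `(0,0)` and `(I,I)`. -/
theorem stmt_7 {H : Type*} [NormedAddCommGroup H] [InnerProductSpace ℂ H]
    [CompleteSpace H] (T : H →L[ℂ] H) (n : ℕ) (hn : 1 ≤ n)
    (lam : ℕ → ℂ) (hlam : lam 0 ≠ 0) :
    (∀ A B : H →L[ℂ] H, A ∘L A = A → B ∘L B = B →
      (∀ k : ℕ, 1 ≤ k → k ≤ n → B ∘L (T ^ k : H →L[ℂ] H) = (T ^ k : H →L[ℂ] H) ∘L A) →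
      B ∘L (∑ k ∈ Finset.range (n + 1), lam k • T ^ k) =
        (∑ k ∈ Finset.range (n + 1), lam k • T ^ k) ∘L A →
      (A = 0 ∧ B = 0) ∨ (A = 1 ∧ B = 1))
    ↔ StronglyIrreducible T := by
  constructor
  · -- indecomposable → strongly irreducible
    intro h
    rintro ⟨M, N, hMc, hNc, hMT, hNT, hinf, hsup, hMne, hNne⟩
    have hcompl : IsCompl M N := ⟨disjoint_iff.2 hinf, codisjoint_iff.2 hsup⟩
    set P := M.linearProjOfClosedCompl N hcompl hMc hNc with hP
    set A : H →L[ℂ] H := M.subtypeL ∘L P with hAdef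
    have hAm : ∀ x ∈ M, A x = x := by
      intro x hx
      have := Submodule.linearProjOfIsCompl_apply_left hcompl ⟨x, hx⟩
      simp only [hAdef, ContinuousLinearMap.comp_apply, Submodule.subtypeL_apply, hP,
        Submodule.coe_continuous_linearProjOfClosedCompl']
      rw [this]
    have hAn : ∀ x ∈ N, A x = 0 := by
      intro x hx
      have := Submodule.linearProjOfIsCompl_apply_right' hcompl hx
      simp only [hAdef, ContinuousLinearMap.comp_apply, Submodule.subtypeL_apply, hP,
        Submodule.coe_continuous_linearProjOfClosedCompl']
      rw [this]; rfl
    have hAmem : ∀ x : H, A x ∈ M := fun x => (P x).2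
    have hAidem : A ∘L A = A := by
      ext x; exact hAm (A x) (hAmem x)
    have key : ∀ (p : Submodule ℂ H), (∀ x ∈ p, T x ∈ p) →
        ∀ k : ℕ, ∀ x ∈ p, (T ^ k) x ∈ p := by
      intro p hp k
      induction k with
      | zero => intro x hx; simpa using hx
      | succ k ih =>
        intro x hx
        have hx' : (T ^ (k+1)) x = T ((T ^ k) x) := by
          rw [pow_succ']; rfl
        rw [hx']; exact hp _ (ih x hx)
    have hcomm : ∀ k : ℕ, A ∘L (T ^ k) = (T ^ k) ∘L A := by
      intro k
      have hMTk := key M hMT k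
      have hNTk := key N hNT k
      ext x
      obtain ⟨m, hm, n', hn', rfl⟩ : ∃ m ∈ M, ∃ n' ∈ N, m + n' = x := by
        have : x ∈ M ⊔ N := hsup ▸ Submodule.mem_top
        exact Submodule.mem_sup.1 this
      simp only [ContinuousLinearMap.comp_apply, map_add]
      rw [hAm m hm, hAn n' hn', hAm _ (hMTk m hm), hAn _ (hNTk n' hn'), map_zero, add_zero]
    rcases h A A hAidem hAidem (fun k _ _ => hcomm k) (by
        rw [ContinuousLinearMap.comp_finset_sum, ContinuousLinearMap.finset_sum_comp]
        refine Finset.sum_congr rfl fun k _ => ?_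
        rw [ContinuousLinearMap.comp_smul, ContinuousLinearMap.smul_comp, hcomm k]) with
      ⟨hA0, -⟩ | ⟨hA1, -⟩
    · apply hMne
      rw [Submodule.eq_bot_iff]
      intro x hx
      have h' := hAm x hx
      rw [hA0] at h'
      have h'' : (0 : H) = x := by simpa using h'
      exact h''.symm
    · apply hNne
      rw [Submodule.eq_bot_iff]
      intro x hx
      have h' := hAn x hx
      rw [hA1] at h'
      simpa using h'
  · -- strongly irreducible → indecomposable
    intro hsi A B hA hB hk hsum
    -- Step 1 : B = A
    have hBA : B = A := by
      have e : ∑ k ∈ Finset.range (n + 1), lam k • (B ∘L (T ^ k : H →L[ℂ] H)) =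
          ∑ k ∈ Finset.range (n + 1), lam k • ((T ^ k : H →L[ℂ] H) ∘L A) := by
        calc ∑ k ∈ Finset.range (n + 1), lam k • (B ∘L (T ^ k : H →L[ℂ] H))
            = B ∘L (∑ k ∈ Finset.range (n + 1), lam k • T ^ k) := by
              rw [ContinuousLinearMap.comp_finset_sum]
              exact Finset.sum_congr rfl fun k _ => by
                rw [ContinuousLinearMap.comp_smul]
          _ = (∑ k ∈ Finset.range (n + 1), lam k • T ^ k) ∘L A := hsum
          _ = ∑ k ∈ Finset.range (n + 1), lam k • ((T ^ k : H →L[ℂ] H) ∘L A) := by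
              rw [ContinuousLinearMap.finset_sum_comp]
              exact Finset.sum_congr rfl fun k _ => by
                rw [ContinuousLinearMap.smul_comp]
      rw [Finset.sum_range_succ', Finset.sum_range_succ'] at e
      have e2 : ∑ i ∈ Finset.range n, lam (i+1) • (B ∘L (T ^ (i+1) : H →L[ℂ] H)) =
          ∑ i ∈ Finset.range n, lam (i+1) • ((T ^ (i+1) : H →L[ℂ] H) ∘L A) :=
        Finset.sum_congr rfl fun i hi => by
          rw [hk (i+1) (Nat.le_add_left 1 i) (Nat.succ_le_of_lt (Finset.mem_range.1 hi))]
      rw [e2] at e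
      have e3 : lam 0 • (B ∘L (T ^ 0 : H →L[ℂ] H)) = lam 0 • ((T ^ 0 : H →L[ℂ] H) ∘L A) :=
        add_left_cancel e
      simp only [pow_zero, ContinuousLinearMap.one_def, ContinuousLinearMap.comp_id,
        ContinuousLinearMap.id_comp] at e3
      exact smul_right_injective (H →L[ℂ] H) hlam e3
    subst hBA
    -- Step 2 : B commutes with T
    have hcomm : B ∘L T = T ∘L B := by
      have := hk 1 le_rfl hn
      rwa [pow_one] at this
    have hcomm' : ∀ x, B (T x) = T (B x) := fun x =>
      congrFun (congrArg DFunLike.coe hcomm) x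
    have hidem : ∀ x, B (B x) = B x := fun x =>
      congrFun (congrArg DFunLike.coe hA) x
    -- Step 3 : candidate subspaces
    set M : Submodule ℂ H := LinearMap.range (B : H →ₗ[ℂ] H) with hM
    set N : Submodule ℂ H := LinearMap.ker (B : H →ₗ[ℂ] H) with hN
    have hmemM : ∀ x, x ∈ M ↔ B x = x := by
      intro x
      constructor
      · rintro ⟨y, rfl⟩; exact hidem y
      · intro hx; exact ⟨x, hx⟩
    have hMc : IsClosed (M : Set H) := by
      have : (M : Set H) = (LinearMap.ker ((1 - B : H →L[ℂ] H) : H →ₗ[ℂ] H) : Set H) := by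
        ext x
        simp only [SetLike.mem_coe, LinearMap.mem_ker, ContinuousLinearMap.coe_coe, hmemM,
          ContinuousLinearMap.coe_sub', Pi.sub_apply, ContinuousLinearMap.one_apply,
          sub_eq_zero]
        exact ⟨fun h => h.symm, fun h => h.symm⟩
      rw [this]
      exact ContinuousLinearMap.isClosed_ker _
    have hNc : IsClosed (N : Set H) := ContinuousLinearMap.isClosed_ker B
    have hMT : ∀ x ∈ M, T x ∈ M := by
      intro x hx
      rw [hmemM] at hx ⊢
      rw [hcomm', hx]
    have hNT : ∀ x ∈ N, T x ∈ N := by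
      intro x hx
      have hx' : B x = 0 := hx
      show B (T x) = 0
      rw [hcomm', hx', map_zero]
    have hinf : M ⊓ N = ⊥ := by
      rw [Submodule.eq_bot_iff]
      rintro x ⟨hxM, hxN⟩
      have h1 : B x = x := (hmemM x).1 hxM
      have h2 : B x = 0 := hxN
      rw [h2] at h1; exact h1.symm
    have hsup : M ⊔ N = ⊤ := by
      rw [Submodule.eq_top_iff']
      intro x
      have : x = B x + (x - B x) := by abel
      rw [this]
      refine Submodule.add_mem_sup ⟨x, rfl⟩ ?_
      show B (x - B x) = 0
      rw [map_sub, hidem, sub_self]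
    by_cases hMbot : M = ⊥
    · left
      have : B = 0 := by
        ext x
        have : B x ∈ M := ⟨x, rfl⟩
        rw [hMbot] at this
        simpa using this
      exact ⟨this, this⟩
    by_cases hNbot : N = ⊥
    · right
      have : B = 1 := by
        ext x
        have : x - B x ∈ N := by
          show B (x - B x) = 0
          rw [map_sub, hidem, sub_self]
        rw [hNbot] at this
        have := Submodule.mem_bot (R := ℂ) |>.1 this
        have : B x = x := by linear_combination (norm := module) -this
        simpa using this
      exact ⟨this, this⟩
    exact absurd ⟨M, N, hMc, hNc, hMT, hNT, hinf, hsup, hMbot, hNbot⟩ hsi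
end

section
/- Let Γ = (V,E,s,r) be an arbitrary finite quiver and let (K,f) be a Hilbert representation of Γ. Then there exist a natural number N, a complex Hilbert space H and closed subspaces E₁,…,E_N of H such that End(K,f) is isomorphic as a complex algebra to { S ∈ B(H) : S(E_i) ⊆ E_i for all i = 1,…,N }. -/
set_option synthInstance.maxHeartbeats 1000000

/-- The endomorphism algebra `End(K,f)` of a Hilbert representation `(K,f)` of a quiver
with vertex set `V`, arrow set `E` and source/range maps `s r : E → V`:
the subalgebra of `Π v, B(K v)` of families intertwining all arrow operators. -/
noncomputable def repEnd {V E : Type} (s r : E → V) (K : V → Type)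
    [∀ v, NormedAddCommGroup (K v)] [∀ v, InnerProductSpace ℂ (K v)]
    (f : ∀ α : E, K (s α) →L[ℂ] K (r α)) :
    Subalgebra ℂ (∀ v, K v →L[ℂ] K v) where
  carrier := {T | ∀ α : E, (T (r α)) ∘L (f α) = (f α) ∘L (T (s α))}
  mul_mem' := by
    intro T T' hT hT' α
    ext x
    have h1 : T' (r α) (f α x) = f α (T' (s α) x) := DFunLike.congr_fun (hT' α) x
    have h2 : T (r α) (f α (T' (s α) x)) = f α (T (s α) (T' (s α) x)) :=
      DFunLike.congr_fun (hT α) (T' (s α) x)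
    simp [ContinuousLinearMap.mul_apply, h1, h2]
  one_mem' := by intro α; ext x; simp
  add_mem' := by
    intro T T' hT hT' α
    ext x
    have h1 : T (r α) (f α x) = f α (T (s α) x) := DFunLike.congr_fun (hT α) x
    have h2 : T' (r α) (f α x) = f α (T' (s α) x) := DFunLike.congr_fun (hT' α) x
    simp [h1, h2]
  zero_mem' := by intro α; ext x; simp
  algebraMap_mem' := by
    intro c α
    ext x
    simp [Algebra.algebraMap_eq_smul_one]

/-- The endomorphism algebra of a system of subspaces `(H; (E_i)_{i ∈ ι})`:
the subalgebra of `B(H)` of operators leaving every subspace `E i` invariant. -/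
noncomputable def invAlg {H : Type} [NormedAddCommGroup H] [InnerProductSpace ℂ H]
    {ι : Type} (Esub : ι → Submodule ℂ H) : Subalgebra ℂ (H →L[ℂ] H) where
  carrier := {S | ∀ i : ι, ∀ x ∈ Esub i, S x ∈ Esub i}
  mul_mem' := by
    intro S S' hS hS' i x hx
    rw [ContinuousLinearMap.mul_apply]
    exact hS i _ (hS' i x hx)
  one_mem' := by intro i x hx; simpa using hx
  add_mem' := by
    intro S S' hS hS' i x hx
    rw [ContinuousLinearMap.add_apply]
    exact (Esub i).add_mem (hS i x hx) (hS' i x hx)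
  zero_mem' := by intro i x hx; simp
  algebraMap_mem' := by
    intro c i x hx
    rw [Algebra.algebraMap_eq_smul_one]
    rw [ContinuousLinearMap.smul_apply, ContinuousLinearMap.one_apply]
    exact (Esub i).smul_mem c hx

/-- A complex Hilbert space together with `N` closed subspaces. -/
structure HilbertSystem (N : ℕ) where
  H : Type
  [grp : NormedAddCommGroup H]
  [ips : InnerProductSpace ℂ H]
  [cpl : CompleteSpace H]
  Esub : Fin N → Submodule ℂ H
  closed : ∀ i : Fin N, IsClosed ((Esub i : Set H))

attribute [instance] HilbertSystem.grp HilbertSystem.ips HilbertSystem.cpl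

set_option linter.unusedSectionVars false
section Aux

variable {V E : Type} [Fintype V] [Fintype E] [DecidableEq V] (s r : E → V) (K : V → Type)
  [∀ v, NormedAddCommGroup (K v)] [∀ v, InnerProductSpace ℂ (K v)]
  [∀ v, CompleteSpace (K v)]
  (f : ∀ α : E, K (s α) →L[ℂ] K (r α))

/-- First coordinate copy: `{p | p.2 = 0}`. -/
noncomputable def subA : Submodule ℂ (WithLp 2 (PiLp 2 K × PiLp 2 K)) where
  carrier := {p | p.snd = 0}
  add_mem' := by
    intro a b ha hb
    have ha' : a.snd = 0 := ha
    have hb' : b.snd = 0 := hb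
    show (a + b).snd = 0
    rw [WithLp.add_snd, ha', hb', add_zero]
  zero_mem' := rfl
  smul_mem' := by
    intro c a ha
    have ha' : a.snd = 0 := ha
    show (c • a).snd = 0
    rw [WithLp.smul_snd, ha', smul_zero]

/-- Second coordinate copy: `{p | p.fst = 0}`. -/
noncomputable def subB : Submodule ℂ (WithLp 2 (PiLp 2 K × PiLp 2 K)) where
  carrier := {p | p.fst = 0}
  add_mem' := by
    intro a b ha hb
    have ha' : a.fst = 0 := ha
    have hb' : b.fst = 0 := hb
    show (a + b).fst = 0
    rw [WithLp.add_fst, ha', hb', add_zero]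
  zero_mem' := rfl
  smul_mem' := by
    intro c a ha
    have ha' : a.fst = 0 := ha
    show (c • a).fst = 0
    rw [WithLp.smul_fst, ha', smul_zero]

/-- The diagonal `{p | p.fst = p.snd}`. -/
noncomputable def subD : Submodule ℂ (WithLp 2 (PiLp 2 K × PiLp 2 K)) where
  carrier := {p | p.fst = p.snd}
  add_mem' := by
    intro a b ha hb
    have ha' : a.fst = a.snd := ha
    have hb' : b.fst = b.snd := hb
    show (a + b).fst = (a + b).snd
    rw [WithLp.add_fst, WithLp.add_snd, ha', hb']
  zero_mem' := rfl
  smul_mem' := by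
    intro c a ha
    have ha' : a.fst = a.snd := ha
    show (c • a).fst = (c • a).snd
    rw [WithLp.smul_fst, WithLp.smul_snd, ha']

/-- The vertex block `K v × K v`. -/
noncomputable def subV (v : V) : Submodule ℂ (WithLp 2 (PiLp 2 K × PiLp 2 K)) where
  carrier := {p | (∀ w, w ≠ v → p.fst w = 0) ∧ (∀ w, w ≠ v → p.snd w = 0)}
  add_mem' := by
    intro a b ha hb
    refine ⟨fun w hw => ?_, fun w hw => ?_⟩
    · show (a + b).fst w = 0
      rw [WithLp.add_fst, PiLp.add_apply, ha.1 w hw, hb.1 w hw, add_zero]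
    · show (a + b).snd w = 0
      rw [WithLp.add_snd, PiLp.add_apply, ha.2 w hw, hb.2 w hw, add_zero]
  zero_mem' := ⟨fun _ _ => rfl, fun _ _ => rfl⟩
  smul_mem' := by
    intro c a ha
    refine ⟨fun w hw => ?_, fun w hw => ?_⟩
    · show (c • a).fst w = 0
      rw [WithLp.smul_fst, PiLp.smul_apply, ha.1 w hw, smul_zero]
    · show (c • a).snd w = 0
      rw [WithLp.smul_snd, PiLp.smul_apply, ha.2 w hw, smul_zero]

/-- The graph of the arrow operator `f α`. -/
noncomputable def subE (α : E) : Submodule ℂ (WithLp 2 (PiLp 2 K × PiLp 2 K)) where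
  carrier := {p | (∀ w, w ≠ s α → p.fst w = 0) ∧ (∀ w, w ≠ r α → p.snd w = 0)
    ∧ p.snd (r α) = f α (p.fst (s α))}
  add_mem' := by
    intro a b ha hb
    refine ⟨fun w hw => ?_, fun w hw => ?_, ?_⟩
    · show (a + b).fst w = 0
      rw [WithLp.add_fst, PiLp.add_apply, ha.1 w hw, hb.1 w hw, add_zero]
    · show (a + b).snd w = 0
      rw [WithLp.add_snd, PiLp.add_apply, ha.2.1 w hw, hb.2.1 w hw, add_zero]
    · show (a + b).snd (r α) = f α ((a + b).fst (s α))
      rw [WithLp.add_snd, WithLp.add_fst, PiLp.add_apply, PiLp.add_apply,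
        ha.2.2, hb.2.2, map_add]
  zero_mem' := ⟨fun _ _ => rfl, fun _ _ => rfl, (map_zero (f α)).symm⟩
  smul_mem' := by
    intro c a ha
    refine ⟨fun w hw => ?_, fun w hw => ?_, ?_⟩
    · show (c • a).fst w = 0
      rw [WithLp.smul_fst, PiLp.smul_apply, ha.1 w hw, smul_zero]
    · show (c • a).snd w = 0
      rw [WithLp.smul_snd, PiLp.smul_apply, ha.2.1 w hw, smul_zero]
    · show (c • a).snd (r α) = f α ((c • a).fst (s α))
      rw [WithLp.smul_snd, WithLp.smul_fst, PiLp.smul_apply, PiLp.smul_apply,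
        ha.2.2, map_smul]

/-- The full family of subspaces. -/
noncomputable def qSub : (Fin 3 ⊕ V ⊕ E) → Submodule ℂ (WithLp 2 (PiLp 2 K × PiLp 2 K))
  | Sum.inl ⟨0, _⟩ => subA K
  | Sum.inl ⟨1, _⟩ => subB K
  | Sum.inl ⟨2, _⟩ => subD K
  | Sum.inr (Sum.inl v) => subV K v
  | Sum.inr (Sum.inr α) => subE s r K f α

lemma cont_fst : Continuous (fun p : WithLp 2 (PiLp 2 K × PiLp 2 K) => p.fst) :=
  continuous_fst.comp (WithLp.prodContinuousLinearEquiv 2 ℂ (PiLp 2 K) (PiLp 2 K)).continuous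

lemma cont_snd : Continuous (fun p : WithLp 2 (PiLp 2 K × PiLp 2 K) => p.snd) :=
  continuous_snd.comp (WithLp.prodContinuousLinearEquiv 2 ℂ (PiLp 2 K) (PiLp 2 K)).continuous

lemma cont_fst_apply (w : V) :
    Continuous (fun p : WithLp 2 (PiLp 2 K × PiLp 2 K) => p.fst w) :=
  (continuous_apply w).comp ((PiLp.continuousLinearEquiv 2 ℂ K).continuous.comp (cont_fst K))

lemma cont_snd_apply (w : V) :
    Continuous (fun p : WithLp 2 (PiLp 2 K × PiLp 2 K) => p.snd w) :=
  (continuous_apply w).comp ((PiLp.continuousLinearEquiv 2 ℂ K).continuous.comp (cont_snd K))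

lemma supp_closed_fst (v : V) :
    IsClosed {p : WithLp 2 (PiLp 2 K × PiLp 2 K) | ∀ w, w ≠ v → p.fst w = 0} := by
  rw [Set.setOf_forall]
  refine isClosed_iInter fun w => ?_
  by_cases h : w = v
  · have : {p : WithLp 2 (PiLp 2 K × PiLp 2 K) | w ≠ v → p.fst w = 0} = Set.univ := by
      ext p; simp [h]
    rw [this]; exact isClosed_univ
  · have : {p : WithLp 2 (PiLp 2 K × PiLp 2 K) | w ≠ v → p.fst w = 0}
        = {p | p.fst w = 0} := by ext p; simp [h]
    rw [this]; exact isClosed_eq (cont_fst_apply K w) continuous_const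

lemma supp_closed_snd (v : V) :
    IsClosed {p : WithLp 2 (PiLp 2 K × PiLp 2 K) | ∀ w, w ≠ v → p.snd w = 0} := by
  rw [Set.setOf_forall]
  refine isClosed_iInter fun w => ?_
  by_cases h : w = v
  · have : {p : WithLp 2 (PiLp 2 K × PiLp 2 K) | w ≠ v → p.snd w = 0} = Set.univ := by
      ext p; simp [h]
    rw [this]; exact isClosed_univ
  · have : {p : WithLp 2 (PiLp 2 K × PiLp 2 K) | w ≠ v → p.snd w = 0}
        = {p | p.snd w = 0} := by ext p; simp [h]
    rw [this]; exact isClosed_eq (cont_snd_apply K w) continuous_const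

lemma qSub_closed (j : Fin 3 ⊕ V ⊕ E) : IsClosed ((qSub s r K f j : Set (WithLp 2 (PiLp 2 K × PiLp 2 K)))) := by
  obtain (i | v | α) := j
  · fin_cases i
    · show IsClosed {p : WithLp 2 (PiLp 2 K × PiLp 2 K) | p.snd = 0}
      exact isClosed_eq (cont_snd K) continuous_const
    · show IsClosed {p : WithLp 2 (PiLp 2 K × PiLp 2 K) | p.fst = 0}
      exact isClosed_eq (cont_fst K) continuous_const
    · show IsClosed {p : WithLp 2 (PiLp 2 K × PiLp 2 K) | p.fst = p.snd}
      exact isClosed_eq (cont_fst K) (cont_snd K)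
  · show IsClosed {p : WithLp 2 (PiLp 2 K × PiLp 2 K) |
      (∀ w, w ≠ v → p.fst w = 0) ∧ (∀ w, w ≠ v → p.snd w = 0)}
    rw [Set.setOf_and]
    exact (supp_closed_fst K v).inter (supp_closed_snd K v)
  · show IsClosed {p : WithLp 2 (PiLp 2 K × PiLp 2 K) |
      (∀ w, w ≠ s α → p.fst w = 0) ∧ (∀ w, w ≠ r α → p.snd w = 0)
        ∧ p.snd (r α) = f α (p.fst (s α))}
    rw [Set.setOf_and, Set.setOf_and]
    refine (supp_closed_fst K (s α)).inter ((supp_closed_snd K (r α)).inter ?_)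
    exact isClosed_eq (cont_snd_apply K (r α))
      ((f α).continuous.comp (cont_fst_apply K (s α)))

/-- The diagonal operator on `⊕ᵥ Kᵥ` associated to a family `(Tᵥ)`. -/
noncomputable def diagOp (T : ∀ v, K v →L[ℂ] K v) : PiLp 2 K →L[ℂ] PiLp 2 K :=
  (PiLp.continuousLinearEquiv 2 ℂ K).symm.toContinuousLinearMap ∘L
    (ContinuousLinearMap.pi fun v => (T v) ∘L
      (ContinuousLinearMap.proj v : (∀ u, K u) →L[ℂ] K v)) ∘L
    (PiLp.continuousLinearEquiv 2 ℂ K).toContinuousLinearMap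

lemma diagOp_apply (T : ∀ v, K v →L[ℂ] K v) (x : PiLp 2 K) (w : V) :
    diagOp K T x w = T w (x w) := rfl

/-- The doubled diagonal operator on `H = (⊕ᵥ Kᵥ)²`. -/
noncomputable def bigOp (T : ∀ v, K v →L[ℂ] K v) :
    WithLp 2 (PiLp 2 K × PiLp 2 K) →L[ℂ] WithLp 2 (PiLp 2 K × PiLp 2 K) :=
  (WithLp.prodContinuousLinearEquiv 2 ℂ (PiLp 2 K) (PiLp 2 K)).symm.toContinuousLinearMap ∘L
    ((diagOp K T).prodMap (diagOp K T)) ∘L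
    (WithLp.prodContinuousLinearEquiv 2 ℂ (PiLp 2 K) (PiLp 2 K)).toContinuousLinearMap

lemma bigOp_fst (T : ∀ v, K v →L[ℂ] K v) (p : WithLp 2 (PiLp 2 K × PiLp 2 K)) (w : V) :
    (bigOp K T p).fst w = T w (p.fst w) := rfl

lemma bigOp_snd (T : ∀ v, K v →L[ℂ] K v) (p : WithLp 2 (PiLp 2 K × PiLp 2 K)) (w : V) :
    (bigOp K T p).snd w = T w (p.snd w) := rfl

lemma opExt {A B : WithLp 2 (PiLp 2 K × PiLp 2 K) →L[ℂ] WithLp 2 (PiLp 2 K × PiLp 2 K)}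
    (h1 : ∀ p w, (A p).fst w = (B p).fst w) (h2 : ∀ p w, (A p).snd w = (B p).snd w) : A = B :=
  ContinuousLinearMap.ext fun p =>
    (WithLp.ext_iff _).2 (Prod.ext (PiLp.ext fun w => h1 p w) (PiLp.ext fun w => h2 p w))

/-- The canonical inclusion `K v → ⊕ᵥ Kᵥ`. -/
noncomputable def sing (v : V) : K v →L[ℂ] PiLp 2 K :=
  (PiLp.continuousLinearEquiv 2 ℂ K).symm.toContinuousLinearMap.comp
    ⟨LinearMap.single ℂ K v, continuous_single v⟩

lemma sing_apply (v : V) (ξ : K v) (w : V) : sing K v ξ w = Pi.single v ξ w := rfl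

lemma piLp_sum_apply {n : Type} [Fintype n] (g : n → PiLp 2 K) (w : V) :
    (∑ i, g i) w = ∑ i, g i w :=
  map_sum ((LinearMap.proj w : (∀ v, K v) →ₗ[ℂ] K w) ∘ₗ
    (WithLp.linearEquiv 2 ℂ (∀ v, K v)).toLinearMap) g Finset.univ

lemma mem_invAlg_iff {H : Type} [NormedAddCommGroup H] [InnerProductSpace ℂ H]
    {ι : Type} (Esub : ι → Submodule ℂ H) (S : H →L[ℂ] H) :
    S ∈ invAlg Esub ↔ ∀ i, ∀ x ∈ Esub i, S x ∈ Esub i := Iff.rfl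

instance : CompleteSpace (PiLp 2 K) :=
  ((PiLp.continuousLinearEquiv 2 ℂ K).isUniformEmbedding.toIsUniformInducing.completeSpace_congr
    (PiLp.continuousLinearEquiv 2 ℂ K).surjective).mpr inferInstance

lemma mem_repEnd_iff (T : ∀ v, K v →L[ℂ] K v) :
    T ∈ repEnd s r K f ↔ ∀ α, (T (r α)) ∘L f α = f α ∘L T (s α) := Iff.rfl

end Aux

set_option maxHeartbeats 1000000 in
/-- **Every finite quiver's Hilbert representation endomorphism algebra is the
endomorphism algebra of a system of subspaces.**  For any finite quiver `Γ` and any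
Hilbert representation `(K,f)` of `Γ`, there exist `N ∈ ℕ`, a complex Hilbert space `H`
and closed subspaces `E₁, …, E_N` of `H` such that `End(K,f)` is isomorphic, as a complex
algebra, to `{ S ∈ B(H) : S(E_i) ⊆ E_i for all i }`. -/
theorem stmt_18 {V E : Type} [Fintype V] [Fintype E] (s r : E → V)
    (K : V → Type) [∀ v, NormedAddCommGroup (K v)] [∀ v, InnerProductSpace ℂ (K v)]
    [∀ v, CompleteSpace (K v)]
    (f : ∀ α : E, K (s α) →L[ℂ] K (r α)) :
    ∃ (N : ℕ) (𝒮 : HilbertSystem N),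
      Nonempty (repEnd s r K f ≃ₐ[ℂ] invAlg 𝒮.Esub) := by
  classical
  let e : (Fin 3 ⊕ V ⊕ E) ≃ Fin (Fintype.card (Fin 3 ⊕ V ⊕ E)) := Fintype.equivFin _
  refine ⟨Fintype.card (Fin 3 ⊕ V ⊕ E),
    ⟨WithLp 2 (PiLp 2 K × PiLp 2 K), fun i => qSub s r K f (e.symm i),
      fun i => qSub_closed s r K f (e.symm i)⟩, ⟨?_⟩⟩
  -- invariance of all the subspaces under `bigOp T` for `T ∈ repEnd`
  have hjall : ∀ T : repEnd s r K f, ∀ j, ∀ x ∈ qSub s r K f j,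
      bigOp K T.1 x ∈ qSub s r K f j := by
    rintro T (i | v | α) x hx
    · fin_cases i
      · have hx' : x.snd = 0 := hx
        show (bigOp K T.1 x).snd = 0
        refine PiLp.ext fun w => ?_
        rw [bigOp_snd, hx']
        exact map_zero (T.1 w)
      · have hx' : x.fst = 0 := hx
        show (bigOp K T.1 x).fst = 0
        refine PiLp.ext fun w => ?_
        rw [bigOp_fst, hx']
        exact map_zero (T.1 w)
      · have hx' : x.fst = x.snd := hx
        show (bigOp K T.1 x).fst = (bigOp K T.1 x).snd
        refine PiLp.ext fun w => ?_
        rw [bigOp_fst, bigOp_snd, hx']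
    · obtain ⟨hx1, hx2⟩ := hx
      refine ⟨fun w hw => ?_, fun w hw => ?_⟩
      · rw [bigOp_fst, hx1 w hw]; exact map_zero (T.1 w)
      · rw [bigOp_snd, hx2 w hw]; exact map_zero (T.1 w)
    · obtain ⟨hx1, hx2, hx3⟩ := hx
      refine ⟨fun w hw => ?_, fun w hw => ?_, ?_⟩
      · rw [bigOp_fst, hx1 w hw]; exact map_zero (T.1 w)
      · rw [bigOp_snd, hx2 w hw]; exact map_zero (T.1 w)
      · rw [bigOp_snd, bigOp_fst, hx3]
        exact DFunLike.congr_fun (T.2 α) (x.fst (s α))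
  have hinv : ∀ T : repEnd s r K f,
      bigOp K T.1 ∈ invAlg (fun i => qSub s r K f (e.symm i)) :=
    fun T => (mem_invAlg_iff _ _).2 (fun i x hx => hjall T (e.symm i) x hx)
  let Φ : repEnd s r K f →ₐ[ℂ] invAlg (fun i => qSub s r K f (e.symm i)) :=
  { toFun := fun T => ⟨bigOp K T.1, hinv T⟩
    map_one' := rfl
    map_mul' := fun _ _ => rfl
    map_zero' := rfl
    map_add' := fun _ _ => rfl
    commutes' := fun _ => rfl }
  have hinj : Function.Injective Φ := by
    intro T T' h
    have hb : bigOp K T.1 = bigOp K T'.1 := congrArg Subtype.val h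
    apply Subtype.ext
    funext v
    apply ContinuousLinearMap.ext
    intro ξ
    have h2 := congrArg (fun S : WithLp 2 (PiLp 2 K × PiLp 2 K) →L[ℂ] _ =>
      (S ((WithLp.equiv 2 (PiLp 2 K × PiLp 2 K)).symm (sing K v ξ, 0))).fst v) hb
    simpa [bigOp_fst, WithLp.toLp_fst, sing_apply, Pi.single_eq_same] using h2
  have hsurj : Function.Surjective Φ := by
    rintro ⟨S, hS⟩
    have hS' : ∀ j, ∀ x ∈ qSub s r K f j, S x ∈ qSub s r K f j := by
      intro j x hx
      have := (mem_invAlg_iff (fun i => qSub s r K f (e.symm i)) S).1 hS (e j) x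
        (by simpa using hx)
      simpa using this
    let pe := WithLp.prodContinuousLinearEquiv 2 ℂ (PiLp 2 K) (PiLp 2 K)
    let A : PiLp 2 K →L[ℂ] PiLp 2 K :=
      (ContinuousLinearMap.fst ℂ (PiLp 2 K) (PiLp 2 K)) ∘L pe.toContinuousLinearMap ∘L S ∘L
        pe.symm.toContinuousLinearMap ∘L (ContinuousLinearMap.inl ℂ (PiLp 2 K) (PiLp 2 K))
    let mk : PiLp 2 K → PiLp 2 K → WithLp 2 (PiLp 2 K × PiLp 2 K) :=
      fun x y => (WithLp.equiv 2 (PiLp 2 K × PiLp 2 K)).symm (x, y)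
    have hA_def : ∀ x, A x = (S (mk x 0)).fst := fun _ => rfl
    have h1 : ∀ x, (S (mk x 0)).snd = 0 := fun x =>
      hS' (Sum.inl ⟨0, by omega⟩) (mk x 0) rfl
    have h2 : ∀ y, (S (mk 0 y)).fst = 0 := fun y =>
      hS' (Sum.inl ⟨1, by omega⟩) (mk 0 y) rfl
    have hdiag : ∀ x, (S (mk x x)).fst = (S (mk x x)).snd := fun x =>
      hS' (Sum.inl ⟨2, by omega⟩) (mk x x) rfl
    have hsplit : ∀ x y, S (mk x y) = S (mk x 0) + S (mk 0 y) := by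
      intro x y
      have hxy : mk x y = mk x 0 + mk 0 y := by
        refine (WithLp.ext_iff _).2 (Prod.ext ?_ ?_)
        · show x = x + 0; rw [add_zero]
        · show y = 0 + y; rw [zero_add]
      rw [hxy, map_add]
    have hfst_xy : ∀ x y, (S (mk x y)).fst = A x := by
      intro x y
      rw [hsplit, WithLp.add_fst, h2 y, add_zero, hA_def]
    have hsnd_xy : ∀ x y, (S (mk x y)).snd = (S (mk 0 y)).snd := by
      intro x y
      rw [hsplit, WithLp.add_snd, h1 x, zero_add]
    have hBA : ∀ x, (S (mk 0 x)).snd = A x := by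
      intro x
      have hd := hdiag x
      rw [hfst_xy x x, hsnd_xy x x] at hd
      exact hd.symm
    have hSfull : ∀ p, S p = mk (A p.fst) (A p.snd) := by
      intro p
      refine (WithLp.ext_iff _).2 (Prod.ext (hfst_xy p.fst p.snd) ?_)
      show (S p).snd = A p.snd
      rw [show (S p).snd = (S (mk 0 p.snd)).snd from hsnd_xy p.fst p.snd, hBA]
    have hsupp : ∀ v (x : PiLp 2 K), (∀ w, w ≠ v → x w = 0) →
        ∀ w, w ≠ v → A x w = 0 := by
      intro v x hx w hw
      have hmem : mk x 0 ∈ qSub s r K f (Sum.inr (Sum.inl v)) :=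
        ⟨hx, fun u hu => rfl⟩
      exact (hS' (Sum.inr (Sum.inl v)) (mk x 0) hmem).1 w hw
    let T : ∀ v, K v →L[ℂ] K v := fun v =>
      (ContinuousLinearMap.proj v : (∀ u, K u) →L[ℂ] K v) ∘L
        (PiLp.continuousLinearEquiv 2 ℂ K).toContinuousLinearMap ∘L A ∘L sing K v
    have hT_def : ∀ v ξ, T v ξ = A (sing K v ξ) v := fun _ _ => rfl
    have hsing : ∀ v ξ, A (sing K v ξ) = sing K v (T v ξ) := by
      intro v ξ
      refine PiLp.ext fun w => ?_
      rcases eq_or_ne w v with rfl | hw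
      · rw [sing_apply, Pi.single_eq_same]
        rfl
      · rw [sing_apply, Pi.single_eq_of_ne hw]
        exact hsupp v _ (fun u hu => by rw [sing_apply, Pi.single_eq_of_ne hu]) w hw
    have hsum : ∀ x : PiLp 2 K, ∑ v, sing K v (x v) = x := by
      intro x
      refine PiLp.ext fun w => ?_
      rw [piLp_sum_apply]
      have : ∑ v, Pi.single v (x v) w = x w := by
        rw [← Finset.sum_apply, Finset.univ_sum_single]
      exact this
    have hAx : ∀ (x : PiLp 2 K) (w : V), A x w = T w (x w) := by
      intro x w
      conv_lhs => rw [← hsum x]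
      rw [map_sum, piLp_sum_apply]
      have hterm : ∀ v, A (sing K v (x v)) w = Pi.single v (T v (x v)) w := by
        intro v; rw [hsing]; rfl
      rw [Finset.sum_congr rfl (fun v _ => hterm v), ← Finset.sum_apply,
        Finset.univ_sum_single (fun v => T v (x v))]
    have hT_rep : T ∈ repEnd s r K f := by
      refine (mem_repEnd_iff s r K f T).2 fun α => ?_
      ext ξ
      have hpmem : mk (sing K (s α) ξ) (sing K (r α) (f α ξ))
          ∈ qSub s r K f (Sum.inr (Sum.inr α)) := by
        refine ⟨fun w hw => ?_, fun w hw => ?_, ?_⟩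
        · show sing K (s α) ξ w = 0
          rw [sing_apply, Pi.single_eq_of_ne hw]
        · show sing K (r α) (f α ξ) w = 0
          rw [sing_apply, Pi.single_eq_of_ne hw]
        · show sing K (r α) (f α ξ) (r α) = f α (sing K (s α) ξ (s α))
          rw [sing_apply, sing_apply, Pi.single_eq_same, Pi.single_eq_same]
      have h3 := (hS' (Sum.inr (Sum.inr α)) _ hpmem).2.2
      have e1 : (S (mk (sing K (s α) ξ) (sing K (r α) (f α ξ)))).fst (s α)
          = T (s α) ξ := by
        rw [hfst_xy, hT_def]
      have e2 : (S (mk (sing K (s α) ξ) (sing K (r α) (f α ξ)))).snd (r α)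
          = T (r α) (f α ξ) := by
        rw [hsnd_xy, hBA, hT_def]
      rw [e1, e2] at h3
      exact h3
    refine ⟨⟨T, hT_rep⟩, ?_⟩
    apply Subtype.ext
    show bigOp K T = S
    refine opExt K (fun p w => ?_) (fun p w => ?_)
    · rw [bigOp_fst, hSfull p]
      show T w (p.fst w) = A p.fst w
      rw [hAx]
    · rw [bigOp_snd, hSfull p]
      show T w (p.snd w) = A p.snd w
      rw [hAx]
  exact AlgEquiv.ofBijective Φ ⟨hinj, hsurj⟩
end
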